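/- Let X and Y be measurable spaces, let (G₀, G₁) be a pair of probability measures on X, and let (P₀, P₁) be a garbling of (G₀, G₁) via a Markov kernel κ from X to Y. Then for every α ∈ [0,1], the maximal power at level α of the garbled experiment is no larger than that of the original experiment: sup{ ∫ ψ dP₁ : ψ : Y → [0,1] measurable, ∫ ψ dP₀ ≤ α } ≤ sup{ ∫ ψ dG₁ : ψ : X → [0,1] measurable, ∫ ψ dG₀ ≤ α }. -/

import Mathlib

open MeasureTheory ProbabilityTheory
open scoped ENNReal

lemma aux_lint_le_one {Y : Type*} [MeasurableSpace Y] (μ : Measure Y) [IsProbabilityMeasure μ]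
    {ψ : Y → ℝ} (h1 : ∀ y, ψ y ≤ 1) :
    ∫⁻ y, ENNReal.ofReal (ψ y) ∂μ ≤ 1 := by
  calc ∫⁻ y, ENNReal.ofReal (ψ y) ∂μ ≤ ∫⁻ _, 1 ∂μ := by
        refine lintegral_mono fun y => ?_
        simpa using ENNReal.ofReal_le_one.2 (h1 y)
    _ = 1 := by simp

lemma aux_integral_eq {Y : Type*} [MeasurableSpace Y] (μ : Measure Y)
    {ψ : Y → ℝ} (hm : Measurable ψ) (h0 : ∀ y, 0 ≤ ψ y) :
    ∫ y, ψ y ∂μ = (∫⁻ y, ENNReal.ofReal (ψ y) ∂μ).toReal := by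
  rw [integral_eq_lintegral_of_nonneg_ae (Filter.Eventually.of_forall h0)
    hm.aestronglyMeasurable]

/-- Garbling cannot increase the maximal power of a level-α test: if
`(P₀, P₁) = (G₀.bind κ, G₁.bind κ)` for a Markov kernel `κ`, then the supremum of powers of
randomized level-α tests for the garbled experiment is at most that of the original one. -/
theorem garbling_le_maxPower
    {X Y : Type*} [MeasurableSpace X] [MeasurableSpace Y]
    (G₀ G₁ : Measure X) [IsProbabilityMeasure G₀] [IsProbabilityMeasure G₁]
    (κ : Kernel X Y) [IsMarkovKernel κ]
    (P₀ P₁ : Measure Y) (hP₀ : P₀ = G₀.bind (fun x => κ x)) (hP₁ : P₁ = G₁.bind (fun x => κ x))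
    (α : ℝ) (hα : α ∈ Set.Icc (0 : ℝ) 1) :
    sSup {r : ℝ | ∃ ψ : Y → ℝ, Measurable ψ ∧ (∀ y, 0 ≤ ψ y) ∧ (∀ y, ψ y ≤ 1) ∧
        (∫ y, ψ y ∂P₀) ≤ α ∧ r = ∫ y, ψ y ∂P₁} ≤
    sSup {r : ℝ | ∃ ψ : X → ℝ, Measurable ψ ∧ (∀ x, 0 ≤ ψ x) ∧ (∀ x, ψ x ≤ 1) ∧
        (∫ x, ψ x ∂G₀) ≤ α ∧ r = ∫ x, ψ x ∂G₁} := by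
  apply csSup_le_csSup
  · -- right set bounded above by 1
    refine ⟨1, fun r hr => ?_⟩
    obtain ⟨ψ, hm, h0, h1, -, hr⟩ := hr
    rw [hr, aux_integral_eq G₁ hm h0]
    have := aux_lint_le_one G₁ h1
    calc (∫⁻ x, ENNReal.ofReal (ψ x) ∂G₁).toReal ≤ (1 : ℝ≥0∞).toReal :=
          ENNReal.toReal_mono (by simp) this
      _ = 1 := by simp
  · -- left set nonempty
    exact ⟨0, fun _ => 0, measurable_const, fun _ => le_rfl, fun _ => zero_le_one,
      by simpa using hα.1, by simp⟩
  · -- subset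
    rintro r ⟨ψ, hm, h0, h1, hsize, hr⟩
    set g : Y → ℝ≥0∞ := fun y => ENNReal.ofReal (ψ y) with hg
    have hgm : Measurable g := hm.ennreal_ofReal
    set φ : X → ℝ := fun x => (∫⁻ y, g y ∂κ x).toReal with hφ
    have hfin : ∀ x, ∫⁻ y, g y ∂κ x ≤ 1 := fun x => aux_lint_le_one (κ x) h1
    have hφm : Measurable φ := (Measurable.lintegral_kernel hgm).ennreal_toReal
    have hofReal : ∀ x, ENNReal.ofReal (φ x) = ∫⁻ y, g y ∂κ x := fun x =>
      ENNReal.ofReal_toReal (lt_of_le_of_lt (hfin x) ENNReal.one_lt_top).ne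
    have key : ∀ (G : Measure X), ∫ x, φ x ∂G = (∫⁻ y, g y ∂(G.bind (fun x => κ x))).toReal := by
      intro G
      rw [aux_integral_eq G hφm (fun x => ENNReal.toReal_nonneg)]
      congr 1
      rw [Measure.lintegral_bind (κ.measurable.aemeasurable) hgm.aemeasurable]
      exact lintegral_congr hofReal
    refine ⟨φ, hφm, fun x => ENNReal.toReal_nonneg, ?_, ?_, ?_⟩
    · intro x
      have := ENNReal.toReal_mono (by simp) (hfin x)
      simpa using this
    · rw [key G₀, ← hP₀, ← aux_integral_eq P₀ hm h0]
      exact hsize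
    · rw [key G₁, ← hP₁, ← aux_integral_eq P₁ hm h0]
      exact hr
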